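/- For every n ≥ 1 and θ ∈ (0, π): if n = 2p then -cos θ · sin(nθ)/(4n sin θ) - cos(nθ)/4 = λ_n cos(nθ) - (1/(2n)) Σ_{k=0}^{p-1} (1 - δ_{0k}/2) cos(2kθ), and if n = 2p+1 then it equals λ_n cos(nθ) - (1/(2n)) Σ_{k=0}^{p-1} cos((2k+1)θ), where λ_n = -1/4 - 1/(4n). -/

import Mathlib

open Real Finset

lemma even_aux (θ : ℝ) : ∀ p : ℕ,
    Real.cos θ * Real.sin (2 * (p:ℝ) * θ)
      = Real.sin θ * (Real.cos (2 * (p:ℝ) * θ) - 1)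
        + 2 * Real.sin θ * ∑ k ∈ Finset.range p, Real.cos (2 * (k:ℝ) * θ) := by
  intro p
  induction p with
  | zero => simp
  | succ p ih =>
    rw [Finset.sum_range_succ]
    push_cast
    have h1 : 2 * ((p:ℝ) + 1) * θ = 2 * (p:ℝ) * θ + (θ + θ) := by ring
    rw [h1]; simp only [Real.sin_add, Real.cos_add]
    linear_combination ih +
      (Real.cos θ * Real.sin (2 * (p:ℝ) * θ) + Real.sin θ * Real.cos (2 * (p:ℝ) * θ)
        ) * (Real.sin_sq_add_cos_sq θ)

lemma odd_aux (θ : ℝ) : ∀ p : ℕ,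
    Real.cos θ * Real.sin ((2 * (p:ℝ) + 1) * θ)
      = Real.sin θ * Real.cos ((2 * (p:ℝ) + 1) * θ)
        + 2 * Real.sin θ * ∑ k ∈ Finset.range p, Real.cos ((2 * (k:ℝ) + 1) * θ) := by
  intro p
  induction p with
  | zero => simp [Real.sin_add, Real.cos_add]; ring
  | succ p ih =>
    rw [Finset.sum_range_succ]
    push_cast
    have h1 : (2 * ((p:ℝ) + 1) + 1) * θ = (2 * (p:ℝ) + 1) * θ + (θ + θ) := by ring
    rw [h1]; simp only [Real.sin_add, Real.cos_add]
    linear_combination ih +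
      (Real.cos θ * Real.sin ((2 * (p:ℝ) + 1) * θ)
        + Real.sin θ * Real.cos ((2 * (p:ℝ) + 1) * θ)) * (Real.sin_sq_add_cos_sq θ)

/-- Action of the flat-strip Calderón operator `J₀` on the cosine basis, written as
an upper-triangular combination of lower order cosines plus diagonal term `λ_n = -1/4 - 1/(4n)`,
separately for even `n = 2p` and odd `n = 2p+1`. -/
theorem J0_upper_triangular (θ : ℝ) (hθ : θ ∈ Set.Ioo 0 Real.pi) :
    (∀ p : ℕ, 1 ≤ p →
      -Real.cos θ * Real.sin ((2 * (p:ℝ)) * θ) / (4 * (2 * (p:ℝ)) * Real.sin θ)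
          - Real.cos ((2 * (p:ℝ)) * θ) / 4
        = (-1/4 - 1/(4 * (2 * (p:ℝ)))) * Real.cos ((2 * (p:ℝ)) * θ)
          - (1 / (2 * (2 * (p:ℝ)))) *
            ∑ k ∈ Finset.range p,
              (1 - (if k = 0 then (1:ℝ) else 0) / 2) * Real.cos (2 * (k:ℝ) * θ)) ∧
    (∀ p : ℕ,
      -Real.cos θ * Real.sin ((2 * (p:ℝ) + 1) * θ) / (4 * (2 * (p:ℝ) + 1) * Real.sin θ)
          - Real.cos ((2 * (p:ℝ) + 1) * θ) / 4
        = (-1/4 - 1/(4 * (2 * (p:ℝ) + 1))) * Real.cos ((2 * (p:ℝ) + 1) * θ)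
          - (1 / (2 * (2 * (p:ℝ) + 1))) *
            ∑ k ∈ Finset.range p, Real.cos ((2 * (k:ℝ) + 1) * θ)) := by
  have hs : Real.sin θ ≠ 0 := ne_of_gt (Real.sin_pos_of_pos_of_lt_pi hθ.1 hθ.2)
  constructor
  · intro p hp
    have hp' : ((p:ℝ)) ≠ 0 := Nat.cast_ne_zero.mpr (by omega)
    have h0 : 0 ∈ Finset.range p := Finset.mem_range.mpr (by omega)
    have hS : ∑ k ∈ Finset.range p,
        (1 - (if k = 0 then (1:ℝ) else 0) / 2) * Real.cos (2 * (k:ℝ) * θ)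
        = (∑ k ∈ Finset.range p, Real.cos (2 * (k:ℝ) * θ)) - 1/2 := by
      have h1 : ∀ k : ℕ, (1 - (if k = 0 then (1:ℝ) else 0) / 2) * Real.cos (2 * (k:ℝ) * θ)
          = Real.cos (2 * (k:ℝ) * θ) - (if k = 0 then (1:ℝ)/2 else 0) := by
        intro k
        rcases eq_or_ne k 0 with rfl | h
        · simp
        · simp [h]
      simp only [h1, Finset.sum_sub_distrib, Finset.sum_ite_eq' (Finset.range p) 0, h0]
      norm_num
    rw [hS]
    have key := even_aux θ p
    linear_combination (norm := skip) (-1 / (8 * (p:ℝ) * Real.sin θ)) * key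
    field_simp
    ring
  · intro p
    have key := odd_aux θ p
    have hn : (2 * (p:ℝ) + 1) ≠ 0 := by positivity
    linear_combination (norm := skip) (-1 / (4 * (2 * (p:ℝ) + 1) * Real.sin θ)) * key
    field_simp
    ring
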